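/- Let L : ℝ^d → ℝ be differentiable, L∞-smooth with respect to the ℓ∞ norm, and bounded below with infimum L*. Let θ ∈ (0,1). On a probability space, let (x_k) be random vectors with x_0 deterministic and x_{k+1} = x_k − η_k·sign(g_k), where the deterministic learning rates η_k > 0 satisfy ∑_{k=0}^∞ η_k = ∞ and ∑_{k=0}^∞ η_k² < ∞, and each g_k is integrable, conditionally unbiased E[g_k ∣ x_0, …, x_k] = ∇L(x_k), and satisfies E[‖g_k − ∇L(x_k)‖₁ ∣ x_0, …, x_k] ≤ θ·‖∇L(x_k)‖₁ almost surely. Then liminf_{k→∞} E[‖∇L(x_k)‖₁] = 0. -/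

import Mathlib

open MeasureTheory Filter InnerProductSpace

/-- The ℓ1 norm on `ℝ^d`. -/
def l1norm {d : ℕ} (v : EuclideanSpace ℝ (Fin d)) : ℝ := ∑ i, |v i|

/-- The ℓ∞ norm on `ℝ^d`. -/
noncomputable def linfnorm {d : ℕ} (v : EuclideanSpace ℝ (Fin d)) : ℝ := ⨆ i, |v i|

/-- The coordinatewise sign map on `ℝ^d`. -/
noncomputable def signVec {d : ℕ} (v : EuclideanSpace ℝ (Fin d)) : EuclideanSpace ℝ (Fin d) :=
  WithLp.toLp 2 (fun i => Real.sign (v i))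

/-- The σ-algebra generated by the random vectors `x 0, …, x k`. -/
def genBy {Ω : Type*} {d : ℕ} (x : ℕ → Ω → EuclideanSpace ℝ (Fin d)) (k : ℕ) :
    MeasurableSpace Ω :=
  ⨆ i ∈ Finset.range (k + 1), MeasurableSpace.comap (x i) inferInstance

lemma l1norm_nonneg {d : ℕ} (v : EuclideanSpace ℝ (Fin d)) : 0 ≤ l1norm v :=
  Finset.sum_nonneg fun _ _ => abs_nonneg _

lemma norm_le_l1norm {d : ℕ} (v : EuclideanSpace ℝ (Fin d)) : ‖v‖ ≤ l1norm v := by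
  rw [EuclideanSpace.norm_eq]
  have h1 : ∑ i, ‖v i‖ ^ 2 ≤ (∑ i, ‖v i‖) ^ 2 :=
    Finset.sum_sq_le_sq_sum_of_nonneg fun i _ => norm_nonneg _
  calc Real.sqrt (∑ i, ‖v i‖ ^ 2) ≤ Real.sqrt ((∑ i, ‖v i‖) ^ 2) := Real.sqrt_le_sqrt h1
    _ = ∑ i, ‖v i‖ := Real.sqrt_sq (Finset.sum_nonneg fun i _ => norm_nonneg _)
    _ = l1norm v := by simp [l1norm]

lemma linfnorm_le_norm {d : ℕ} (v : EuclideanSpace ℝ (Fin d)) : linfnorm v ≤ ‖v‖ := by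
  refine Real.iSup_le (fun i => ?_) (norm_nonneg _)
  rw [EuclideanSpace.norm_eq]
  calc |v i| = Real.sqrt (‖v i‖ ^ 2) := by rw [Real.sqrt_sq (norm_nonneg _)]; simp
    _ ≤ Real.sqrt (∑ j, ‖v j‖ ^ 2) :=
        Real.sqrt_le_sqrt (Finset.single_le_sum (f := fun j => ‖v j‖ ^ 2)
          (fun j _ => sq_nonneg _) (Finset.mem_univ i))

lemma abs_sign_le_one (t : ℝ) : |Real.sign t| ≤ 1 := by
  rcases lt_trichotomy t 0 with h | h | h <;>
    simp [Real.sign_of_neg, Real.sign_of_pos, *]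

lemma mul_sign_self (t : ℝ) : t * Real.sign t = |t| := by
  rcases lt_trichotomy t 0 with h | h | h
  · rw [Real.sign_of_neg h, abs_of_neg h]; ring
  · simp [h]
  · rw [Real.sign_of_pos h, abs_of_pos h]; ring

lemma norm_signVec_le {d : ℕ} (v : EuclideanSpace ℝ (Fin d)) :
    ‖signVec v‖ ≤ Real.sqrt d := by
  rw [EuclideanSpace.norm_eq]
  refine Real.sqrt_le_sqrt ?_
  calc ∑ i, ‖signVec v i‖ ^ 2 ≤ ∑ _i : Fin d, (1:ℝ) := by
        refine Finset.sum_le_sum fun i _ => ?_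
        calc ‖signVec v i‖ ^ 2 = |Real.sign (v i)| ^ 2 := by simp [signVec]
          _ ≤ 1 ^ 2 := pow_le_pow_left₀ (abs_nonneg _) (abs_sign_le_one _) 2
          _ = 1 := one_pow 2
    _ = (d : ℝ) := by simp

lemma fderiv_eq_inner {d : ℕ} (L : EuclideanSpace ℝ (Fin d) → ℝ) (z : EuclideanSpace ℝ (Fin d)) :
    fderiv ℝ L z = innerSL ℝ (gradient L z) := by
  have h := (toDual ℝ (EuclideanSpace ℝ (Fin d))).apply_symm_apply (fderiv ℝ L z)
  rw [gradient]
  ext v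
  rw [innerSL_apply_apply, ← toDual_apply_apply, h]

lemma descent {d : ℕ} (L : EuclideanSpace ℝ (Fin d) → ℝ) (hL : Differentiable ℝ L)
    (Linf : ℝ)
    (hsmooth : ∀ x y, l1norm (gradient L x - gradient L y) ≤ Linf * linfnorm (x - y))
    (hLinf : 0 ≤ Linf) (x y : EuclideanSpace ℝ (Fin d)) :
    L y ≤ L x + ⟪gradient L x, y - x⟫_ℝ + Linf * ‖y - x‖ ^ 2 := by
  set w := gradient L x with hw
  set F := fun z => L z - (innerSL ℝ w) z with hF
  have hF' : ∀ z, HasFDerivAt F (innerSL ℝ (gradient L z - w)) z := by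
    intro z
    have h1 : HasFDerivAt L (innerSL ℝ (gradient L z)) z := by
      have := (hL z).hasFDerivAt
      rwa [fderiv_eq_inner] at this
    have h2 := (innerSL ℝ w).hasFDerivAt (x := z)
    have h3 := h1.sub h2
    rwa [← map_sub (innerSL ℝ)] at h3
  have bound : ∀ z ∈ segment ℝ x y, ‖innerSL ℝ (gradient L z - w)‖ ≤ Linf * ‖y - x‖ := by
    intro z hz
    rw [innerSL_apply_norm]
    rw [segment_eq_image'] at hz
    obtain ⟨t, ht, rfl⟩ := hz
    have hzx : ‖x + t • (y - x) - x‖ = t * ‖y - x‖ := by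
      rw [add_sub_cancel_left, norm_smul, Real.norm_eq_abs, abs_of_nonneg ht.1]
    calc ‖gradient L (x + t • (y - x)) - w‖
        ≤ l1norm (gradient L (x + t • (y - x)) - w) := norm_le_l1norm _
      _ ≤ Linf * linfnorm (x + t • (y - x) - x) := hsmooth _ _
      _ ≤ Linf * ‖x + t • (y - x) - x‖ :=
          mul_le_mul_of_nonneg_left (linfnorm_le_norm _) hLinf
      _ = Linf * (t * ‖y - x‖) := by rw [hzx]
      _ ≤ Linf * (1 * ‖y - x‖) :=
          mul_le_mul_of_nonneg_left
            (mul_le_mul_of_nonneg_right ht.2 (norm_nonneg _)) hLinf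
      _ = Linf * ‖y - x‖ := by ring
  have key := Convex.norm_image_sub_le_of_norm_hasFDerivWithin_le
    (fun z _ => (hF' z).hasFDerivWithinAt) bound (convex_segment x y)
    (left_mem_segment ℝ x y) (right_mem_segment ℝ x y)
  have h4 : F y - F x = L y - L x - ⟪w, y - x⟫_ℝ := by
    simp only [hF, innerSL_apply_apply, inner_sub_right]
    ring
  have h5 : L y - L x - ⟪w, y - x⟫_ℝ ≤ Linf * ‖y - x‖ * ‖y - x‖ := by
    rw [← h4]
    exact (le_abs_self _).trans (((Real.norm_eq_abs _).symm ▸ key : |F y - F x| ≤ _))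
  nlinarith [h5, sq_nonneg (‖y - x‖)]

lemma inner_signVec_ge {d : ℕ} (w g : EuclideanSpace ℝ (Fin d)) :
    l1norm g - l1norm (g - w) ≤ ⟪w, signVec g⟫_ℝ := by
  have h : ⟪w, signVec g⟫_ℝ = ∑ i, w i * Real.sign (g i) := by
    simp [PiLp.inner_apply, signVec, RCLike.inner_apply, mul_comm]
  rw [h, l1norm, l1norm]
  have key : ∀ i : Fin d, |g i| - |(g - w) i| ≤ w i * Real.sign (g i) := by
    intro i
    have h1 : w i * Real.sign (g i) = g i * Real.sign (g i) - (g i - w i) * Real.sign (g i) := by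
      ring
    rw [h1, mul_sign_self]
    have h2 : (g i - w i) * Real.sign (g i) ≤ |(g - w) i| := by
      calc (g i - w i) * Real.sign (g i) ≤ |(g i - w i) * Real.sign (g i)| := le_abs_self _
        _ = |g i - w i| * |Real.sign (g i)| := abs_mul _ _
        _ ≤ |g i - w i| * 1 := mul_le_mul_of_nonneg_left (abs_sign_le_one _) (abs_nonneg _)
        _ = |(g - w) i| := by rw [mul_one]; rfl
    linarith
  calc (∑ i, |g i|) - ∑ i, |(g - w) i| = ∑ i, (|g i| - |(g - w) i|) := by
        rw [Finset.sum_sub_distrib]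
    _ ≤ ∑ i, w i * Real.sign (g i) := Finset.sum_le_sum fun i _ => key i

lemma liminf_zero_aux (a η : ℕ → ℝ) (ha : ∀ k, 0 ≤ a k) (hη : ∀ k, 0 < η k)
    (hdiv : Tendsto (fun n => ∑ k ∈ Finset.range n, η k) atTop atTop)
    (M : ℝ) (hM : ∀ n, ∑ k ∈ Finset.range n, η k * a k ≤ M) :
    liminf a atTop = 0 := by
  have hfreq : ∀ ε : ℝ, 0 < ε → ∃ᶠ k in atTop, a k ≤ ε := by
    intro ε hε
    by_contra hcon
    rw [not_frequently] at hcon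
    obtain ⟨N, hN⟩ := eventually_atTop.mp hcon
    have hN' : ∀ k, N ≤ k → ε < a k := fun k hk => lt_of_not_ge (hN k hk)
    obtain ⟨n, hnN, hn⟩ : ∃ n, N ≤ n ∧
        (M + ε * ∑ k ∈ Finset.range N, η k) / ε + 1 ≤ ∑ k ∈ Finset.range n, η k := by
      obtain ⟨n, h1, h2⟩ := ((eventually_ge_atTop N).and
        (hdiv.eventually_ge_atTop ((M + ε * ∑ k ∈ Finset.range N, η k) / ε + 1))).exists
      exact ⟨n, h1, h2⟩
    have key : ε * (∑ k ∈ Finset.range n, η k - ∑ k ∈ Finset.range N, η k)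
        ≤ ∑ k ∈ Finset.range n, η k * a k := by
      rw [← Finset.sum_Ico_eq_sub _ hnN, Finset.mul_sum]
      calc ∑ k ∈ Finset.Ico N n, ε * η k ≤ ∑ k ∈ Finset.Ico N n, η k * a k := by
            refine Finset.sum_le_sum fun k hk => ?_
            have h3 := (hN' k (Finset.mem_Ico.mp hk).1).le
            nlinarith [hη k]
        _ ≤ ∑ k ∈ Finset.range n, η k * a k := by
            refine Finset.sum_le_sum_of_subset_of_nonneg ?_ fun k _ _ =>
              mul_nonneg (hη k).le (ha k)
            intro k hk
            exact Finset.mem_range.mpr (Finset.mem_Ico.mp hk).2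
    have hdiveq : ε * ((M + ε * ∑ k ∈ Finset.range N, η k) / ε + 1)
        = M + ε * ∑ k ∈ Finset.range N, η k + ε := by
      field_simp
    have h6 := mul_le_mul_of_nonneg_left hn hε.le
    rw [hdiveq] at h6
    nlinarith [key, hM n, h6]
  have hbd : IsBoundedUnder (· ≥ ·) atTop a := isBoundedUnder_of ⟨0, fun k => ha k⟩
  have hcb : IsCoboundedUnder (· ≥ ·) atTop a :=
    Filter.IsCoboundedUnder.of_frequently_le (hfreq 1 one_pos)
  refine le_antisymm ?_ (le_liminf_of_le hcb (Eventually.of_forall ha))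
  refine le_of_forall_pos_le_add fun ε hε => ?_
  simpa using liminf_le_of_frequently_le (hfreq ε hε) hbd

/-- SignSGD with adaptive batch sizes and learning rates satisfying `∑ η_k = ∞`,
`∑ η_k² < ∞`: `liminf_{k→∞} E[‖∇L(x_k)‖₁] = 0`. -/
theorem stmt8 {d : ℕ} (L : EuclideanSpace ℝ (Fin d) → ℝ) (hL : Differentiable ℝ L)
    (Linf : ℝ) (hLinf_pos : 0 < Linf)
    (hsmooth : ∀ x y, l1norm (gradient L x - gradient L y) ≤ Linf * linfnorm (x - y))
    (Lstar : ℝ) (hinf : IsGLB (Set.range L) Lstar)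
    (θ : ℝ) (hθ : θ ∈ Set.Ioo (0 : ℝ) 1)
    (η : ℕ → ℝ) (hη_pos : ∀ k, 0 < η k)
    (hη_div : Tendsto (fun n => ∑ k ∈ Finset.range n, η k) atTop atTop)
    (hη_sq : Summable fun k => (η k) ^ 2)
    {Ω : Type*} [MeasurableSpace Ω] (μ : Measure Ω) [IsProbabilityMeasure μ]
    (x : ℕ → Ω → EuclideanSpace ℝ (Fin d)) (g : ℕ → Ω → EuclideanSpace ℝ (Fin d))
    (x₀ : EuclideanSpace ℝ (Fin d)) (hx0 : ∀ ω, x 0 ω = x₀)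
    (hxmeas : ∀ k, Measurable (x k))
    (hg_int : ∀ k, Integrable (g k) μ)
    (hupdate : ∀ k ω, x (k + 1) ω = x k ω - η k • signVec (g k ω))
    (hunbiased : ∀ k, μ[g k | genBy x k] =ᵐ[μ] fun ω => gradient L (x k ω))
    (hnoise : ∀ k, ∀ᵐ ω ∂μ,
      (μ[fun ω' => l1norm (g k ω' - gradient L (x k ω')) | genBy x k]) ω
        ≤ θ * l1norm (gradient L (x k ω))) :
    liminf (fun k => ∫ ω, l1norm (gradient L (x k ω)) ∂μ) atTop = 0 := by
  classical
  obtain ⟨hθ0, hθ1⟩ := hθ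
  -- the σ-algebras are sub-σ-algebras
  have hm : ∀ k, genBy x k ≤ ‹MeasurableSpace Ω› := by
    intro k
    refine iSup₂_le fun i _ => (hxmeas i).comap_le
  haveI hsf : ∀ k, SigmaFinite (μ.trim (hm k)) := fun k => by
    haveI := isFiniteMeasure_trim (hm k) (μ := μ)
    infer_instance
  -- continuity of the gradient
  have hGlip : ∀ z w : EuclideanSpace ℝ (Fin d), ‖gradient L z - gradient L w‖ ≤ Linf * ‖z - w‖ := by
    intro z w
    calc ‖gradient L z - gradient L w‖ ≤ l1norm (gradient L z - gradient L w) :=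
          norm_le_l1norm _
      _ ≤ Linf * linfnorm (z - w) := hsmooth z w
      _ ≤ Linf * ‖z - w‖ := mul_le_mul_of_nonneg_left (linfnorm_le_norm _) hLinf_pos.le
  have hGc : Continuous (gradient L) := by
    refine (LipschitzWith.of_dist_le_mul (K := Linf.toNNReal) fun z w => ?_).continuous
    rw [Real.coe_toNNReal _ hLinf_pos.le, dist_eq_norm, dist_eq_norm]
    exact hGlip z w
  have hl1c : Continuous (l1norm (d := d)) := by
    refine continuous_finset_sum _ fun i _ => ?_
    exact ((EuclideanSpace.proj (𝕜 := ℝ) i).continuous).abs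
  -- boundedness of the iterates
  have hbound : ∀ k, ∃ R : ℝ, ∀ ω, ‖x k ω‖ ≤ R := by
    intro k
    induction k with
    | zero => exact ⟨‖x₀‖, fun ω => by rw [hx0 ω]⟩
    | succ k ih =>
      obtain ⟨R, hR⟩ := ih
      refine ⟨R + η k * Real.sqrt d, fun ω => ?_⟩
      rw [hupdate k ω]
      calc ‖x k ω - η k • signVec (g k ω)‖ ≤ ‖x k ω‖ + ‖η k • signVec (g k ω)‖ :=
            norm_sub_le _ _
        _ ≤ R + η k * Real.sqrt d := by
            rw [norm_smul, Real.norm_eq_abs, abs_of_pos (hη_pos k)]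
            exact add_le_add (hR ω)
              (mul_le_mul_of_nonneg_left (norm_signVec_le _) (hη_pos k).le)
  -- integrability of compositions with the iterates
  have integrable_comp : ∀ (φ : EuclideanSpace ℝ (Fin d) → ℝ), Continuous φ → ∀ k,
      Integrable (fun ω => φ (x k ω)) μ := by
    intro φ hφ k
    obtain ⟨R, hR⟩ := hbound k
    obtain ⟨C, hC⟩ := (isCompact_closedBall (0 : EuclideanSpace ℝ (Fin d)) R).exists_bound_of_continuousOn
      hφ.continuousOn
    refine ⟨(hφ.measurable.comp (hxmeas k)).aestronglyMeasurable, ?_⟩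
    refine HasFiniteIntegral.of_bounded (C := C) (ae_of_all _ fun ω => ?_)
    exact hC _ (mem_closedBall_zero_iff.mpr (hR ω))
  have integrable_compE : ∀ (φ : EuclideanSpace ℝ (Fin d) → EuclideanSpace ℝ (Fin d)), Continuous φ → ∀ k,
      Integrable (fun ω => φ (x k ω)) μ := by
    intro φ hφ k
    obtain ⟨R, hR⟩ := hbound k
    obtain ⟨C, hC⟩ := (isCompact_closedBall (0 : EuclideanSpace ℝ (Fin d)) R).exists_bound_of_continuousOn
      hφ.continuousOn
    refine ⟨(hφ.measurable.comp (hxmeas k)).aestronglyMeasurable, ?_⟩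
    refine HasFiniteIntegral.of_bounded (C := C) (ae_of_all _ fun ω => ?_)
    exact hC _ (mem_closedBall_zero_iff.mpr (hR ω))
  -- basic integrability facts
  have hint_L : ∀ k, Integrable (fun ω => L (x k ω)) μ := integrable_comp L hL.continuous
  have hint_grad : ∀ k, Integrable (fun ω => gradient L (x k ω)) μ := integrable_compE _ hGc
  have hint_l1grad : ∀ k, Integrable (fun ω => l1norm (gradient L (x k ω))) μ :=
    integrable_comp _ (hl1c.comp hGc)
  have hint_gcoord : ∀ k (i : Fin d), Integrable (fun ω => g k ω i) μ := fun k i =>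
    (EuclideanSpace.proj (𝕜 := ℝ) i).integrable_comp (hg_int k)
  have hint_gradcoord : ∀ k (i : Fin d), Integrable (fun ω => gradient L (x k ω) i) μ :=
    fun k i => integrable_comp _ ((EuclideanSpace.proj (𝕜 := ℝ) i).continuous.comp hGc) k
  have hint_l1g : ∀ k, Integrable (fun ω => l1norm (g k ω)) μ := by
    intro k
    have : (fun ω => l1norm (g k ω)) = fun ω => ∑ i, |g k ω i| := rfl
    rw [this]
    exact integrable_finset_sum _ fun i _ => (hint_gcoord k i).abs
  have hint_err : ∀ k, Integrable (fun ω => l1norm (g k ω - gradient L (x k ω))) μ := by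
    intro k
    have : (fun ω => l1norm (g k ω - gradient L (x k ω)))
        = fun ω => ∑ i, |g k ω i - gradient L (x k ω) i| := rfl
    rw [this]
    exact integrable_finset_sum _ fun i _ => ((hint_gcoord k i).sub (hint_gradcoord k i)).abs
  -- `a k` : expected ℓ1 norm of gradient
  set a : ℕ → ℝ := fun k => ∫ ω, l1norm (gradient L (x k ω)) ∂μ with ha_def
  have ha_nonneg : ∀ k, 0 ≤ a k := fun k =>
    integral_nonneg fun ω => l1norm_nonneg _
  -- Step A : conditional Jensen, `a k ≤ E‖g k‖₁`
  have stepA : ∀ k, a k ≤ ∫ ω, l1norm (g k ω) ∂μ := by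
    intro k
    haveI := hsf k
    have hxm : Measurable[genBy x k] (x k) := by
      refine Measurable.of_comap_le ?_
      exact le_iSup₂ (f := fun i (_ : i ∈ Finset.range (k+1)) =>
        MeasurableSpace.comap (x i) inferInstance) k (Finset.self_mem_range_succ k)
    have hcoord : ∀ i : Fin d,
        (fun ω => gradient L (x k ω) i) =ᵐ[μ] μ[(fun ω => g k ω i)| genBy x k] := by
      intro i
      refine ae_eq_condExp_of_forall_setIntegral_eq (hm k) (hint_gcoord k i)
        (fun s _ _ => (hint_gradcoord k i).integrableOn) (fun s hs _ => ?_) ?_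
      · have hvec : ∫ ω in s, gradient L (x k ω) ∂μ = ∫ ω in s, g k ω ∂μ := by
          have h1 : ∫ ω in s, gradient L (x k ω) ∂μ = ∫ ω in s, (μ[g k| genBy x k]) ω ∂μ :=
            setIntegral_congr_ae ((hm k) s hs) (((hunbiased k).symm).mono fun ω hω _ => hω)
          rw [h1, setIntegral_condExp (hm k) (hg_int k) hs]
        have h2 := (EuclideanSpace.proj (𝕜 := ℝ) i).integral_comp_comm
          ((hint_grad k).integrableOn (s := s))
        have h3 := (EuclideanSpace.proj (𝕜 := ℝ) i).integral_comp_comm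
          ((hg_int k).integrableOn (s := s))
        exact h2.trans (by rw [hvec]; exact h3.symm)
      · have hc : Measurable[genBy x k] (fun ω => gradient L (x k ω) i) :=
          (((EuclideanSpace.proj (𝕜 := ℝ) i).continuous.comp hGc).measurable).comp hxm
        exact (hc.stronglyMeasurable).aestronglyMeasurable
    have habs : ∀ i : Fin d, ∫ ω, |gradient L (x k ω) i| ∂μ ≤ ∫ ω, |g k ω i| ∂μ := by
      intro i
      have h1 : μ[(fun ω => g k ω i)|genBy x k] ≤ᵐ[μ] μ[(fun ω => |g k ω i|)|genBy x k] :=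
        condExp_mono (hint_gcoord k i) (hint_gcoord k i).abs
          (ae_of_all _ fun ω => le_abs_self _)
      have h2 : μ[(fun ω => -(g k ω i))|genBy x k] ≤ᵐ[μ] μ[(fun ω => |g k ω i|)|genBy x k] :=
        condExp_mono (hint_gcoord k i).neg (hint_gcoord k i).abs
          (ae_of_all _ fun ω => neg_le_abs _)
      have h3 : μ[(fun ω => -(g k ω i))|genBy x k]
          =ᵐ[μ] -μ[(fun ω => g k ω i)|genBy x k] := by
        have := condExp_neg (μ := μ) (m := genBy x k) (fun ω => g k ω i)
        exact this
      have h4 : ∀ᵐ ω ∂μ, |(μ[(fun ω => g k ω i)|genBy x k]) ω|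
          ≤ (μ[(fun ω => |g k ω i|)|genBy x k]) ω := by
        filter_upwards [h1, h2, h3] with ω e1 e2 e3
        rw [abs_le]
        constructor
        · rw [e3] at e2
          simp only [Pi.neg_apply] at e2
          linarith
        · exact e1
      have h5 : ∀ᵐ ω ∂μ, |gradient L (x k ω) i|
          ≤ (μ[(fun ω => |g k ω i|)|genBy x k]) ω := by
        filter_upwards [hcoord i, h4] with ω e1 e2
        rw [e1]; exact e2
      calc ∫ ω, |gradient L (x k ω) i| ∂μ
          ≤ ∫ ω, (μ[(fun ω => |g k ω i|)|genBy x k]) ω ∂μ :=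
            integral_mono_ae (hint_gradcoord k i).abs integrable_condExp h5
        _ = ∫ ω, |g k ω i| ∂μ := integral_condExp (hm k)
    have e1 : a k = ∑ i, ∫ ω, |gradient L (x k ω) i| ∂μ := by
      rw [ha_def]
      exact integral_finset_sum _ fun i _ => (hint_gradcoord k i).abs
    have e2 : ∫ ω, l1norm (g k ω) ∂μ = ∑ i, ∫ ω, |g k ω i| ∂μ :=
      integral_finset_sum _ fun i _ => (hint_gcoord k i).abs
    rw [e1, e2]
    exact Finset.sum_le_sum fun i _ => habs i
  -- Step B : noise bound
  have stepB : ∀ k, ∫ ω, l1norm (g k ω - gradient L (x k ω)) ∂μ ≤ θ * a k := by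
    intro k
    haveI := hsf k
    calc ∫ ω, l1norm (g k ω - gradient L (x k ω)) ∂μ
        = ∫ ω, (μ[(fun ω' => l1norm (g k ω' - gradient L (x k ω')))|genBy x k]) ω ∂μ :=
          (integral_condExp (hm k)).symm
      _ ≤ ∫ ω, θ * l1norm (gradient L (x k ω)) ∂μ :=
          integral_mono_ae integrable_condExp ((hint_l1grad k).const_mul θ) (hnoise k)
      _ = θ * a k := by rw [ha_def, integral_const_mul]
  -- Step C+D : expected descent
  have stepD : ∀ k, ∫ ω, L (x (k+1) ω) ∂μ
      ≤ (∫ ω, L (x k ω) ∂μ) - (1 - θ) * η k * a k + (Linf * d) * η k ^ 2 := by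
    intro k
    have hpt : ∀ ω, L (x (k+1) ω) ≤ L (x k ω)
        - η k * (l1norm (g k ω) - l1norm (g k ω - gradient L (x k ω)))
        + (Linf * d) * η k ^ 2 := by
      intro ω
      have hd := descent L hL Linf hsmooth hLinf_pos.le (x k ω) (x (k+1) ω)
      have hyx : x (k+1) ω - x k ω = -(η k • signVec (g k ω)) := by
        rw [hupdate k ω]; abel
      have hinner : ⟪gradient L (x k ω), x (k+1) ω - x k ω⟫_ℝ
          = -(η k * ⟪gradient L (x k ω), signVec (g k ω)⟫_ℝ) := by
        rw [hyx, inner_neg_right, real_inner_smul_right]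
      have hnorm : ‖x (k+1) ω - x k ω‖ ^ 2 ≤ η k ^ 2 * d := by
        rw [hyx, norm_neg, norm_smul, Real.norm_eq_abs, abs_of_pos (hη_pos k)]
        have hs := norm_signVec_le (g k ω)
        have hd0 : (0:ℝ) ≤ d := Nat.cast_nonneg d
        have hss : ‖signVec (g k ω)‖ ^ 2 ≤ (d : ℝ) := by
          calc ‖signVec (g k ω)‖ ^ 2 ≤ Real.sqrt d ^ 2 :=
                pow_le_pow_left₀ (norm_nonneg _) hs 2
            _ = (d : ℝ) := Real.sq_sqrt hd0
        calc (η k * ‖signVec (g k ω)‖) ^ 2 = η k ^ 2 * ‖signVec (g k ω)‖ ^ 2 := by ring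
          _ ≤ η k ^ 2 * d := mul_le_mul_of_nonneg_left hss (sq_nonneg _)
      have hsign := inner_signVec_ge (gradient L (x k ω)) (g k ω)
      have h7 := mul_le_mul_of_nonneg_left hsign (hη_pos k).le
      have h8 := mul_le_mul_of_nonneg_left hnorm hLinf_pos.le
      rw [hinner] at hd
      nlinarith [hd, h7, h8]
    have i1 : Integrable (fun ω =>
        η k * (l1norm (g k ω) - l1norm (g k ω - gradient L (x k ω)))) μ := by
      exact ((hint_l1g k).sub (hint_err k)).const_mul (η k)
    have i2 : Integrable (fun ω => L (x k ω)
        - η k * (l1norm (g k ω) - l1norm (g k ω - gradient L (x k ω)))) μ := by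
      exact (hint_L k).sub i1
    have hintbig : Integrable (fun ω => L (x k ω)
        - η k * (l1norm (g k ω) - l1norm (g k ω - gradient L (x k ω)))
        + (Linf * d) * η k ^ 2) μ := by
      exact i2.add (integrable_const _)
    have h1 : ∫ ω, L (x (k+1) ω) ∂μ ≤ ∫ ω, (L (x k ω)
        - η k * (l1norm (g k ω) - l1norm (g k ω - gradient L (x k ω)))
        + (Linf * d) * η k ^ 2) ∂μ :=
      integral_mono (hint_L (k+1)) hintbig (fun ω => hpt ω)
    have h2 : ∫ ω, (L (x k ω)
        - η k * (l1norm (g k ω) - l1norm (g k ω - gradient L (x k ω)))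
        + (Linf * d) * η k ^ 2) ∂μ
        = (∫ ω, L (x k ω) ∂μ)
          - η k * ((∫ ω, l1norm (g k ω) ∂μ) - ∫ ω, l1norm (g k ω - gradient L (x k ω)) ∂μ)
          + (Linf * d) * η k ^ 2 := by
      rw [integral_add i2 (integrable_const _),
        integral_sub (hint_L k) i1,
        integral_const_mul, integral_sub (hint_l1g k) (hint_err k), integral_const]
      simp
    rw [h2] at h1
    have hA := stepA k
    have hB := stepB k
    have hη := (hη_pos k).le
    nlinarith [h1, mul_le_mul_of_nonneg_left hA hη, mul_le_mul_of_nonneg_left hB hη]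
  -- Step E : telescoping bound
  set M : ℝ := L x₀ - Lstar + (Linf * d) * (∑' k, η k ^ 2) with hM_def
  have stepE : ∀ n, ∑ k ∈ Finset.range n, ((1 - θ) * η k) * a k ≤ M := by
    have key : ∀ n, (∫ ω, L (x n ω) ∂μ) + ∑ k ∈ Finset.range n, (1 - θ) * η k * a k
        ≤ L x₀ + (Linf * d) * ∑ k ∈ Finset.range n, η k ^ 2 := by
      intro n
      induction n with
      | zero =>
        have : (fun ω => L (x 0 ω)) = fun _ => L x₀ := funext fun ω => by rw [hx0]
        simp [this]
      | succ n ihn =>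
        have hD := stepD n
        rw [Finset.sum_range_succ, Finset.sum_range_succ]
        have harr : (1 - θ) * η n * a n = (1 - θ) * η n * a n := rfl
        linarith [hD, ihn]
    intro n
    have h1 := key n
    have h2 : Lstar ≤ ∫ ω, L (x n ω) ∂μ := by
      have h3 : ∫ (_ : Ω), Lstar ∂μ ≤ ∫ ω, L (x n ω) ∂μ :=
        integral_mono (integrable_const _) (hint_L n) (fun ω => hinf.1 ⟨x n ω, rfl⟩)
      simpa using h3
    have h4 : ∑ k ∈ Finset.range n, η k ^ 2 ≤ ∑' k, η k ^ 2 :=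
      Summable.sum_le_tsum (Finset.range n) (fun k _ => sq_nonneg _) hη_sq
    have h5 : (Linf * d) * ∑ k ∈ Finset.range n, η k ^ 2 ≤ (Linf * d) * ∑' k, η k ^ 2 :=
      mul_le_mul_of_nonneg_left h4 (mul_nonneg hLinf_pos.le (Nat.cast_nonneg d))
    rw [hM_def]
    calc ∑ k ∈ Finset.range n, ((1 - θ) * η k) * a k
        ≤ L x₀ + (Linf * d) * ∑ k ∈ Finset.range n, η k ^ 2 - ∫ ω, L (x n ω) ∂μ := by
          linarith [key n]
      _ ≤ L x₀ - Lstar + (Linf * d) * (∑' k, η k ^ 2) := by linarith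
  -- conclude
  have := liminf_zero_aux a (fun k => (1 - θ) * η k) ha_nonneg
    (fun k => mul_pos (by linarith) (hη_pos k)) ?_ M stepE
  · exact this
  · have : (fun n => ∑ k ∈ Finset.range n, (1 - θ) * η k)
        = fun n => (1 - θ) * ∑ k ∈ Finset.range n, η k := by
      funext n; rw [Finset.mul_sum]
    rw [this]
    exact hη_div.const_mul_atTop (by linarith)
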